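/- Let ℓ ≥ 2 and let S be a set of pairs (i,j) with 1 ≤ i < j ≤ ℓ. Let v = Σ_{i=1}^ℓ a_i e_i ∈ ℝ^ℓ satisfy: (a) a_1 + … + a_ℓ = 0; (b) v ≠ 0; (c) ⟨m_{ij}, v⟩ ≥ 0 for all (i,j) ∈ S; and (d) there is a subset 𝒮 ⊆ S with ⟨m_{ij}, v⟩ = 0 for all (i,j) ∈ 𝒮 such that the linear span of {m_{ij} : (i,j) ∈ 𝒮} in ℝ^ℓ has dimension ℓ − 2 (i.e. v is orthogonal to a facet of σ, so v generates an extreme ray of the dual cone σ^∨). Then there exist a constant c > 0 and a partition {1,…,ℓ} = I⁻ ⊔ I⁺ into two nonempty sets such that a_i = −c/#I⁻ for every i ∈ I⁻ and a_i = c/#I⁺ for every i ∈ I⁺. -/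

import Mathlib

open scoped RealInnerProductSpace

/-- The vector `m_{ij} = e_i - e_j` in `ℝ^ℓ`. -/
noncomputable def rootVec (ℓ : ℕ) (p : Fin ℓ × Fin ℓ) : EuclideanSpace ℝ (Fin ℓ) :=
  EuclideanSpace.single p.1 (1 : ℝ) - EuclideanSpace.single p.2 (1 : ℝ)

theorem rootVec_inner (ℓ : ℕ) (p : Fin ℓ × Fin ℓ) (x : EuclideanSpace ℝ (Fin ℓ)) :
    ⟪rootVec ℓ p, x⟫ = x p.1 - x p.2 := by
  simp [rootVec, inner_sub_left, EuclideanSpace.inner_single_left]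

/-- A generator of an extreme ray of the dual cone `σ^∨`: if `v ∈ ℝ^ℓ` has
coordinates summing to zero, is nonzero, pairs nonnegatively with every
`m_{ij} = e_i - e_j`, `(i,j) ∈ S`, and is orthogonal to a subfamily
`𝒮 ⊆ S` spanning an `(ℓ-2)`-dimensional subspace (a facet of `σ`), then up to
a positive scaling, there is a partition `{1,…,ℓ} = I⁻ ⊔ I⁺` such that
`v i = -c/#I⁻` on `I⁻` and `v i = c/#I⁺` on `I⁺`. -/
theorem dual_cone_generator_structure (ℓ : ℕ) (hℓ : 2 ≤ ℓ)
    (S : Set (Fin ℓ × Fin ℓ)) (hS : ∀ p ∈ S, p.1 < p.2)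
    (v : EuclideanSpace ℝ (Fin ℓ))
    (hsum : ∑ i, v i = 0) (hv0 : v ≠ 0)
    (hnn : ∀ p ∈ S, 0 ≤ ⟪rootVec ℓ p, v⟫)
    (𝒮 : Set (Fin ℓ × Fin ℓ)) (h𝒮 : 𝒮 ⊆ S)
    (horth : ∀ p ∈ 𝒮, ⟪rootVec ℓ p, v⟫ = 0)
    (hdim : Module.finrank ℝ (Submodule.span ℝ (rootVec ℓ '' 𝒮)) = ℓ - 2) :
    ∃ c : ℝ, 0 < c ∧ ∃ Iminus Iplus : Finset (Fin ℓ),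
      Iminus.Nonempty ∧ Iplus.Nonempty ∧ Disjoint Iminus Iplus ∧
      Iminus ∪ Iplus = Finset.univ ∧
      (∀ i ∈ Iminus, v i = -c / (Iminus.card : ℝ)) ∧
      (∀ i ∈ Iplus, v i = c / (Iplus.card : ℝ)) := by
  classical
  have heq : ∀ p ∈ 𝒮, v p.1 = v p.2 := by
    intro p hp
    have h := horth p hp
    rw [rootVec_inner] at h
    linarith
  set W := Submodule.span ℝ (rootVec ℓ '' 𝒮) with hW
  -- the orthogonal complement has dimension 2
  have hWperp : Module.finrank ℝ (Wᗮ : Submodule ℝ (EuclideanSpace ℝ (Fin ℓ))) = 2 := by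
    have h1 := Submodule.finrank_add_finrank_orthogonal (K := W)
    have h2 : Module.finrank ℝ (EuclideanSpace ℝ (Fin ℓ)) = ℓ := by simp
    rw [h2] at h1
    omega
  -- indicator vectors of level sets of v
  set ind : ℝ → EuclideanSpace ℝ (Fin ℓ) :=
    fun t => WithLp.toLp 2 (fun i => if v i = t then (1 : ℝ) else 0) with hind
  have hindapp : ∀ (t : ℝ) (i : Fin ℓ), ind t i = if v i = t then (1 : ℝ) else 0 :=
    fun t i => rfl
  have hindmem : ∀ t : ℝ, ind t ∈ Wᗮ := by
    intro t
    rw [Submodule.mem_orthogonal]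
    intro u hu
    induction hu using Submodule.span_induction with
    | mem x hx =>
      obtain ⟨p, hp, rfl⟩ := hx
      rw [rootVec_inner, hindapp, hindapp, heq p hp]
      ring
    | zero => simp
    | add x y _ _ hx hy => rw [inner_add_left, hx, hy]; ring
    | smul a x _ hx => rw [inner_smul_left, hx]; ring
  -- the (attained) values of v
  set T : Finset ℝ := Finset.univ.image v with hT
  have hmemT : ∀ i : Fin ℓ, v i ∈ T := fun i => Finset.mem_image_of_mem v (Finset.mem_univ i)
  have hcard : T.card ≤ 2 := by
    have hli : LinearIndependent ℝ (fun t : T => ind (t : ℝ)) := by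
      rw [Fintype.linearIndependent_iff]
      intro g hg t
      obtain ⟨i, -, hi⟩ := Finset.mem_image.mp t.2
      have h0 : ⟪EuclideanSpace.single i (1 : ℝ), ∑ t' : T, g t' • ind (t' : ℝ)⟫ = 0 := by
        rw [hg]; simp
      rw [inner_sum] at h0
      have hexp : ∀ t' : T, ⟪EuclideanSpace.single i (1 : ℝ), g t' • ind (t' : ℝ)⟫
          = if (t : ℝ) = (t' : ℝ) then g t' else 0 := by
        intro t'
        rw [real_inner_smul_right, EuclideanSpace.inner_single_left, hindapp, hi]
        by_cases h : (t : ℝ) = (t' : ℝ) <;> simp [h]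
      rw [Finset.sum_congr rfl (fun t' _ => hexp t')] at h0
      simp only [Subtype.coe_inj] at h0
      rw [Finset.sum_ite_eq] at h0
      simpa using h0
    have hli' : LinearIndependent ℝ (fun t : T => (⟨ind (t : ℝ), hindmem _⟩ : Wᗮ)) := by
      rw [Fintype.linearIndependent_iff] at hli ⊢
      intro g hg
      apply hli g
      have h2 : ((∑ i : T, g i • (⟨ind (i : ℝ), hindmem _⟩ : Wᗮ) : Wᗮ) :
          EuclideanSpace ℝ (Fin ℓ)) = 0 := by rw [hg]; rfl
      rw [Submodule.coe_sum] at h2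
      simpa using h2
    have := hli'.fintype_card_le_finrank
    rwa [hWperp, Fintype.card_coe] at this
  -- v attains a positive value
  have hne : ∃ i, v i ≠ 0 := by
    by_contra h
    push_neg at h
    exact hv0 (PiLp.ext h)
  have hpos : ∃ i, 0 < v i := by
    by_contra h
    push_neg at h
    obtain ⟨i, hi⟩ := hne
    have : ∀ j ∈ (Finset.univ : Finset (Fin ℓ)), v j ≤ 0 := fun j _ => h j
    have hall : ∀ j ∈ (Finset.univ : Finset (Fin ℓ)), v j = 0 :=
      (Finset.sum_eq_zero_iff_of_nonpos this).mp hsum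
    exact hi (hall i (Finset.mem_univ i))
  obtain ⟨ip, hip⟩ := hpos
  set b : ℝ := v ip with hb
  -- v attains another value
  have hother : ∃ j, v j ≠ b := by
    by_contra h
    push_neg at h
    rw [Finset.sum_congr rfl (fun j _ => h j)] at hsum
    simp only [Finset.sum_const, Finset.card_univ, Fintype.card_fin, smul_eq_mul] at hsum
    have hb0 : b = 0 := by
      rw [nsmul_eq_mul] at hsum
      rcases mul_eq_zero.mp hsum with h' | h'
      · exact absurd h' (by positivity)
      · exact h'
    exact absurd hb0 (ne_of_gt hip)
  obtain ⟨jm, hjm⟩ := hother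
  set a : ℝ := v jm with ha
  have hab : a ≠ b := hjm
  -- v attains only the values a and b
  have hsub : ({a, b} : Finset ℝ) ⊆ T := by
    intro x hx
    rcases Finset.mem_insert.mp hx with rfl | hx
    · exact hmemT jm
    · rw [Finset.mem_singleton.mp hx]; exact hmemT ip
  have hTab : T = {a, b} :=
    (Finset.eq_of_subset_of_card_le hsub (hcard.trans_eq (Finset.card_pair hab).symm)).symm
  have hvals : ∀ i, v i = a ∨ v i = b := by
    intro i
    have := hmemT i
    rw [hTab] at this
    simpa using this
  -- the two level sets
  set Im : Finset (Fin ℓ) := Finset.univ.filter (fun i => v i = a) with hIm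
  set Ip : Finset (Fin ℓ) := Finset.univ.filter (fun i => v i = b) with hIp
  have hjmIm : jm ∈ Im := by simp [hIm, ha]
  have hipIp : ip ∈ Ip := by simp [hIp, hb]
  have hImpos : (0 : ℝ) < Im.card := by
    exact_mod_cast Finset.card_pos.mpr ⟨jm, hjmIm⟩
  have hIppos : (0 : ℝ) < Ip.card := by
    exact_mod_cast Finset.card_pos.mpr ⟨ip, hipIp⟩
  have hcompl : Finset.univ.filter (fun i => ¬ v i = a) = Ip := by
    ext i
    simp only [Finset.mem_filter, Finset.mem_univ, true_and, hIp]
    constructor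
    · intro h; exact (hvals i).resolve_left h
    · intro h; rw [h]; exact fun hba => hab hba.symm
  have hsplit : (Im.card : ℝ) * a + (Ip.card : ℝ) * b = 0 := by
    have h := hsum
    rw [← Finset.sum_filter_add_sum_filter_not Finset.univ (fun i => v i = a)] at h
    rw [hcompl, ← hIm] at h
    rw [Finset.sum_congr rfl (fun i hi => (Finset.mem_filter.mp hi).2),
      Finset.sum_congr rfl (fun i hi => (Finset.mem_filter.mp hi).2 : ∀ i ∈ Ip, v i = b)] at h
    simpa [nsmul_eq_mul] using h
  refine ⟨b * Ip.card, mul_pos hip hIppos, Im, Ip, ⟨jm, hjmIm⟩, ⟨ip, hipIp⟩, ?_, ?_, ?_, ?_⟩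
  · rw [Finset.disjoint_left]
    intro i hi hi'
    rw [hIm, Finset.mem_filter] at hi
    rw [hIp, Finset.mem_filter] at hi'
    exact hab (hi.2.symm.trans hi'.2)
  · ext i
    simp only [Finset.mem_union, Finset.mem_filter, Finset.mem_univ, true_and, hIm, hIp]
    simpa using hvals i
  · intro i hi
    rw [hIm, Finset.mem_filter] at hi
    rw [hi.2]
    field_simp
    linarith
  · intro i hi
    rw [hIp, Finset.mem_filter] at hi
    rw [hi.2]
    field_simp
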